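/- In the equal-channel case hᵢ = h, the optimal max-min rate t* of the NOMA power allocation problem (maximize t subject to existence of β ≥ 0 with Σβᵢ ≤ 1 and βᵢ P h ≥ (2^t−1)(Ph Σ_{l>i} β_l + σ²)) equals (1/N) log₂(1 + P h/σ²). -/

import Mathlib

open Finset Real

private lemma fin_filter_sum (N : ℕ) (β : Fin N → ℝ) (j : ℕ) :
    (∑ l ∈ Finset.univ.filter (fun l : Fin N => j ≤ l.val), β l)
      = ∑ l ∈ Finset.Ico j N, (fun n => if h : n < N then β ⟨n, h⟩ else 0) l := by
  rw [Finset.sum_filter]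
  have h1 : ∀ i : Fin N, (if j ≤ i.val then β i else 0)
      = (fun n => if j ≤ n then (if h : n < N then β ⟨n, h⟩ else 0) else 0) i.val := by
    intro i; simp [i.isLt]
  rw [Finset.sum_congr rfl (fun i _ => h1 i),
    Fin.sum_univ_eq_sum_range (fun n => if j ≤ n then (if h : n < N then β ⟨n,h⟩ else 0) else 0),
    ← Finset.sum_filter]
  apply Finset.sum_congr
  · ext x; simp; omega
  · intros; rfl

private lemma geom_ico (q : ℝ) (j N : ℕ) :
    (∑ l ∈ Finset.Ico j N, q ^ (N - 1 - l)) * (q - 1) = q ^ (N - j) - 1 := by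
  rw [Finset.sum_Ico_eq_sum_range]
  have h1 : ∀ k ∈ Finset.range (N - j), q ^ (N - 1 - (j + k)) = q ^ ((N - j) - 1 - k) := by
    intro k hk; congr 1; simp at hk; omega
  rw [Finset.sum_congr rfl h1, Finset.sum_range_reflect (fun k => q ^ k), geom_sum_mul]

/-- with equal channels, the optimal max-min rate equals
`(1/N) log₂(1 + Ph/σ²)`. -/
theorem noma_maxmin_equal_channels (N : ℕ) (hN : 1 ≤ N) (P σ2 h : ℝ)
    (hP : 0 < P) (hσ : 0 < σ2) (hh : 0 < h) :
    IsGreatest {t : ℝ | ∃ β : Fin N → ℝ, (∀ i, 0 ≤ β i) ∧ (∑ i, β i) ≤ 1 ∧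
        ∀ i : Fin N,
          ((2 : ℝ) ^ t - 1) *
              (P * h * (∑ l ∈ Finset.univ.filter (fun l => i < l), β l) + σ2) ≤
            β i * P * h}
      ((1 / (N : ℝ)) * Real.logb 2 (1 + P * h / σ2)) := by
  have hPh : 0 < P * h := mul_pos hP hh
  have hG : 0 < P * h / σ2 := div_pos hPh hσ
  have hbase : 1 < 1 + P * h / σ2 := by linarith
  have hNR : (0:ℝ) < (N : ℝ) := by exact_mod_cast Nat.lt_of_lt_of_le Nat.zero_lt_one hN
  set q : ℝ := (1 + P * h / σ2) ^ ((N:ℝ)⁻¹) with hqdef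
  have hq1 : 1 < q := by
    apply (Real.one_lt_rpow_iff_of_pos (by linarith)).mpr
    exact Or.inl ⟨hbase, by positivity⟩
  have hqN : q ^ N = 1 + P * h / σ2 :=
    Real.rpow_inv_natCast_pow (by linarith) (by omega)
  have h2t : (2:ℝ) ^ ((1 / (N : ℝ)) * Real.logb 2 (1 + P * h / σ2)) = q := by
    rw [mul_comm, Real.rpow_mul (by norm_num), Real.rpow_logb (by norm_num) (by norm_num)
      (by linarith), hqdef, one_div]
  constructor
  · -- membership
    refine ⟨fun i => σ2 * (q - 1) * q ^ (N - 1 - i.val) / (P * h), ?_, ?_, ?_⟩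
    · intro i
      have : (0:ℝ) ≤ q - 1 := by linarith
      positivity
    · -- sum equals 1
      have hsum : (∑ i : Fin N, σ2 * (q - 1) * q ^ (N - 1 - i.val) / (P * h))
          = σ2 / (P * h) * ((∑ l ∈ Finset.Ico 0 N, q ^ (N - 1 - l)) * (q - 1)) := by
        rw [← Finset.range_eq_Ico,
          ← Fin.sum_univ_eq_sum_range (fun n => q ^ (N - 1 - n)) N, Finset.sum_mul,
          Finset.mul_sum]
        apply Finset.sum_congr rfl
        intro i _; field_simp
      rw [hsum, geom_ico, Nat.sub_zero, hqN]
      have : 1 + P * h / σ2 - 1 = P * h / σ2 := by ring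
      rw [this]
      field_simp; exact le_rfl
    · intro i
      rw [h2t]
      have hfilt : (Finset.univ.filter (fun l : Fin N => i < l))
          = Finset.univ.filter (fun l : Fin N => i.val + 1 ≤ l.val) := by
        apply Finset.filter_congr; intro l _; rw [Fin.lt_def, Nat.lt_iff_add_one_le]
      rw [hfilt, fin_filter_sum N _ (i.val + 1)]
      have hS : (∑ l ∈ Finset.Ico (i.val + 1) N,
            (fun n => if hn : n < N then σ2 * (q - 1) * q ^ (N - 1 - n) / (P * h) else 0) l)
          = σ2 / (P * h) * ((∑ l ∈ Finset.Ico (i.val + 1) N, q ^ (N - 1 - l)) * (q - 1)) := by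
        rw [Finset.sum_mul, Finset.mul_sum]
        apply Finset.sum_congr rfl
        intro l hl
        simp only [Finset.mem_Ico] at hl
        dsimp only; rw [dif_pos hl.2]; field_simp
      rw [hS, geom_ico]
      have hMe : N - (i.val + 1) = N - 1 - i.val := by omega
      rw [hMe]
      apply le_of_eq
      field_simp
      ring
  · -- upper bound
    rintro t ⟨β, hβ0, hβsum, hcon⟩
    set b : ℕ → ℝ := fun n => if hn : n < N then β ⟨n, hn⟩ else 0 with hbdef
    set A : ℕ → ℝ := fun j => ∑ l ∈ Finset.Ico j N, b l with hAdef
    have hb0 : ∀ n, 0 ≤ b n := by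
      intro n; rw [hbdef]; dsimp only; split
      · apply hβ0
      · exact le_refl 0
    have hcon' : ∀ j (hj : j < N),
        ((2:ℝ) ^ t - 1) * (P * h * A (j + 1) + σ2) ≤ b j * (P * h) := by
      intro j hj
      have := hcon ⟨j, hj⟩
      have hfilt : (Finset.univ.filter (fun l : Fin N => (⟨j, hj⟩ : Fin N) < l))
          = Finset.univ.filter (fun l : Fin N => j + 1 ≤ l.val) := by
        apply Finset.filter_congr; intro l _; rw [Fin.lt_def, Nat.lt_iff_add_one_le]
      rw [hfilt, fin_filter_sum N β (j + 1)] at this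
      have hbj : b j = β ⟨j, hj⟩ := by rw [hbdef]; simp [hj]
      rw [hAdef, hbj]
      calc ((2:ℝ)^t - 1) * (P * h * (∑ l ∈ Finset.Ico (j+1) N, b l) + σ2)
          ≤ β ⟨j, hj⟩ * P * h := this
        _ = β ⟨j, hj⟩ * (P * h) := by ring
    have hA0 : A 0 ≤ 1 := by
      rw [hAdef]; dsimp only
      rw [← Finset.range_eq_Ico, ← Fin.sum_univ_eq_sum_range b N]
      calc (∑ i : Fin N, b i.val) = ∑ i : Fin N, β i := by
            apply Finset.sum_congr rfl; intro i _; rw [hbdef]; simp [i.isLt]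
        _ ≤ 1 := hβsum
    have key : ∀ k, k ≤ N → ((2:ℝ) ^ t) ^ k * σ2 ≤ P * h * A (N - k) + σ2 := by
      intro k
      induction k with
      | zero =>
        intro _
        have : A N = 0 := by rw [hAdef]; simp
        simp [this]
      | succ k ih =>
        intro hk
        have hkN : k ≤ N := by omega
        have ihk := ih hkN
        have hjlt : N - (k + 1) < N := by omega
        have hstep := hcon' (N - (k + 1)) hjlt
        have hsucc : N - (k + 1) + 1 = N - k := by omega
        rw [hsucc] at hstep
        have hArec : A (N - (k + 1)) = b (N - (k + 1)) + A (N - k) := by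
          rw [hAdef]; dsimp only
          rw [Finset.sum_eq_sum_Ico_succ_bot hjlt, hsucc]
        have h2pos : (0:ℝ) < (2:ℝ) ^ t := Real.rpow_pos_of_pos (by norm_num) t
        calc ((2:ℝ)^t)^(k+1) * σ2 = (2:ℝ)^t * (((2:ℝ)^t)^k * σ2) := by ring
          _ ≤ (2:ℝ)^t * (P * h * A (N - k) + σ2) := by
              apply mul_le_mul_of_nonneg_left ihk h2pos.le
          _ = (P * h * A (N - k) + σ2) + ((2:ℝ)^t - 1) * (P * h * A (N - k) + σ2) := by ring
          _ ≤ (P * h * A (N - k) + σ2) + b (N - (k+1)) * (P * h) := by linarith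
          _ = P * h * A (N - (k+1)) + σ2 := by rw [hArec]; ring
    have hfin : ((2:ℝ) ^ t) ^ N ≤ 1 + P * h / σ2 := by
      have h1 := key N le_rfl
      rw [Nat.sub_self] at h1
      have h2 : P * h * A 0 ≤ P * h := by
        calc P * h * A 0 ≤ P * h * 1 := by
              apply mul_le_mul_of_nonneg_left hA0 hPh.le
          _ = P * h := by ring
      have h3 : ((2:ℝ)^t)^N * σ2 ≤ P * h + σ2 := by linarith
      have h4 : (1 + P * h / σ2) * σ2 = P * h + σ2 := by field_simp; ring
      rw [← mul_le_mul_iff_of_pos_right hσ, h4]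
      exact h3
    -- conclude t ≤ (1/N) logb 2 (1+G)
    have hrw : ((2:ℝ) ^ t) ^ N = (2:ℝ) ^ (t * (N:ℝ)) := by
      rw [Real.rpow_mul (by norm_num : (0:ℝ) ≤ 2), Real.rpow_natCast]
    have hpos : (0:ℝ) < (2:ℝ) ^ (t * (N:ℝ)) := Real.rpow_pos_of_pos (by norm_num) _
    have hlog : t * (N:ℝ) ≤ Real.logb 2 (1 + P * h / σ2) := by
      have hineq : (2:ℝ) ^ (t * (N:ℝ)) ≤ 1 + P * h / σ2 := hrw ▸ hfin
      have := Real.logb_le_logb_of_le (by norm_num : (1:ℝ) < 2) hpos hineq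
      rwa [Real.logb_rpow (by norm_num) (by norm_num)] at this
    calc t = (t * (N:ℝ)) / (N:ℝ) := by field_simp
      _ ≤ Real.logb 2 (1 + P * h / σ2) / (N:ℝ) := by
          gcongr
      _ = (1 / (N:ℝ)) * Real.logb 2 (1 + P * h / σ2) := by ring
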